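/- arXiv:1607.07110 — 2 statements merged into one kernel-verified Lean document; each statement's English description precedes it below -/
import Mathlib

section
/- For every q in the closed ball B_d(0, η*) one has ‖J(q)U(q) − J(0)U(0)‖ ≤ 4√d·‖q‖_d, where ‖·‖ denotes the ℓ²-operator norm of the d×d matrix J(q)U(q). -/
open Metric

/-- The continuous linear map `ℝ^D → ℝ^d` given by the `d × D` matrix `[I_d | 0_{d,D-d}]`. -/
noncomputable def projCLM (d D : ℕ) (h : d ≤ D) :
    EuclideanSpace ℝ (Fin D) →L[ℝ] EuclideanSpace ℝ (Fin d) :=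
  LinearMap.toContinuousLinearMap
    { toFun := fun x => WithLp.toLp 2 (fun i => x (Fin.castLE h i))
      map_add' := fun _ _ => rfl
      map_smul' := fun _ _ => rfl }

/-- The `D × d` matrix `U(q)` whose `j`-th column is `u(q) − x_j* = u(q) − u(q_j)`,
viewed as a continuous linear map `ℝ^d → ℝ^D`. -/
noncomputable def Umap {d D : ℕ}
    (u : EuclideanSpace ℝ (Fin d) → EuclideanSpace ℝ (Fin D))
    (qs : Fin d → EuclideanSpace ℝ (Fin d)) (q : EuclideanSpace ℝ (Fin d)) :
    EuclideanSpace ℝ (Fin d) →L[ℝ] EuclideanSpace ℝ (Fin D) :=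
  LinearMap.toContinuousLinearMap
    { toFun := fun y => ∑ ℓ : Fin d, y ℓ • (u q - u (qs ℓ))
      map_add' := by
        intro y z
        simp [PiLp.add_apply, add_smul, Finset.sum_add_distrib]
      map_smul' := by
        intro c y
        simp [PiLp.smul_apply, smul_smul, Finset.smul_sum] }

lemma projCLM_apply_norm_le (d D : ℕ) (h : d ≤ D) (x : EuclideanSpace ℝ (Fin D)) :
    ‖projCLM d D h x‖ ≤ ‖x‖ := by
  rw [EuclideanSpace.norm_eq, EuclideanSpace.norm_eq]
  apply Real.sqrt_le_sqrt
  have : (projCLM d D h x : EuclideanSpace ℝ (Fin d)) = fun i => x (Fin.castLE h i) := rfl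
  rw [this]
  calc ∑ i : Fin d, ‖x (Fin.castLE h i)‖ ^ 2
      = ∑ j ∈ Finset.univ.map (Fin.castLEEmb h), ‖x j‖ ^ 2 := by
        rw [Finset.sum_map]; rfl
    _ ≤ ∑ j : Fin D, ‖x j‖ ^ 2 :=
        Finset.sum_le_sum_of_subset_of_nonneg (Finset.subset_univ _)
          (fun j _ _ => by positivity)

lemma abs_sum_le (d : ℕ) (y : EuclideanSpace ℝ (Fin d)) :
    ∑ ℓ : Fin d, |y ℓ| ≤ Real.sqrt d * ‖y‖ := by
  set z : EuclideanSpace ℝ (Fin d) := (WithLp.equiv 2 _).symm fun ℓ => |y ℓ| with hz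
  set w : EuclideanSpace ℝ (Fin d) := (WithLp.equiv 2 _).symm fun _ => (1 : ℝ) with hw
  have h1 : ∑ ℓ : Fin d, |y ℓ| = (inner ℝ w z : ℝ) := by
    rw [PiLp.inner_apply]
    simp [hz, hw, RCLike.inner_apply, WithLp.equiv_symm_apply, PiLp.toLp_apply]
  have h2 : ‖z‖ = ‖y‖ := by
    rw [EuclideanSpace.norm_eq, EuclideanSpace.norm_eq]
    congr 1
    apply Finset.sum_congr rfl
    intro i _
    simp [hz, Real.norm_eq_abs, sq_abs, WithLp.equiv_symm_apply, PiLp.toLp_apply]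
  have h3 : ‖w‖ = Real.sqrt d := by
    rw [EuclideanSpace.norm_eq]
    simp [hw, WithLp.equiv_symm_apply, PiLp.toLp_apply]
  calc ∑ ℓ : Fin d, |y ℓ| = (inner ℝ w z : ℝ) := h1
    _ ≤ ‖w‖ * ‖z‖ := real_inner_le_norm w z
    _ = Real.sqrt d * ‖y‖ := by rw [h2, h3]

/-- norm bound for a linear combination of bounded columns -/
lemma comb_norm_le {d D : ℕ} (c : Fin d → EuclideanSpace ℝ (Fin D)) (M : ℝ)
    (hM : 0 ≤ M) (hc : ∀ ℓ, ‖c ℓ‖ ≤ M) (y : EuclideanSpace ℝ (Fin d)) :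
    ‖∑ ℓ : Fin d, y ℓ • c ℓ‖ ≤ Real.sqrt d * M * ‖y‖ := by
  calc ‖∑ ℓ : Fin d, y ℓ • c ℓ‖ ≤ ∑ ℓ : Fin d, ‖y ℓ • c ℓ‖ := norm_sum_le _ _
    _ = ∑ ℓ : Fin d, |y ℓ| * ‖c ℓ‖ := by
        apply Finset.sum_congr rfl; intro ℓ _; rw [norm_smul, Real.norm_eq_abs]
    _ ≤ ∑ ℓ : Fin d, |y ℓ| * M := by
        apply Finset.sum_le_sum; intro ℓ _
        exact mul_le_mul_of_nonneg_left (hc ℓ) (abs_nonneg _)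
    _ = (∑ ℓ : Fin d, |y ℓ|) * M := by rw [Finset.sum_mul]
    _ ≤ (Real.sqrt d * ‖y‖) * M :=
        mul_le_mul_of_nonneg_right (abs_sum_le d y) hM
    _ = Real.sqrt d * M * ‖y‖ := by ring

/-- for every `q ∈ B_d(0, η*)`,
`‖J(q)U(q) − J(0)U(0)‖ ≤ 4√d · ‖q‖_d` (ℓ²-operator norm of the `d × d` matrix). -/
theorem statement3 (d D : ℕ) (hd : 1 ≤ d) (hdD : d ≤ D)
    (u : EuclideanSpace ℝ (Fin d) → EuclideanSpace ℝ (Fin D))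
    (δ κ : ℝ) (hδ : 0 < δ) (hκ : 0 < κ)
    (J : EuclideanSpace ℝ (Fin d) → (EuclideanSpace ℝ (Fin D) →L[ℝ] EuclideanSpace ℝ (Fin d)))
    (hu : ∀ q ∈ closedBall (0 : EuclideanSpace ℝ (Fin d)) δ,
      HasFDerivWithinAt u (ContinuousLinearMap.adjoint (J q)) (closedBall 0 δ) q)
    (hJcont : ContinuousOn J (closedBall 0 δ))
    (hJ0 : J 0 = projCLM d D hdD)
    (hJlip : ∀ q ∈ closedBall (0 : EuclideanSpace ℝ (Fin d)) δ, ‖J q - J 0‖ ≤ κ * ‖q‖)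
    (qs : Fin d → EuclideanSpace ℝ (Fin d))
    (hqs : ∀ ℓ, qs ℓ ∈ closedBall (0 : EuclideanSpace ℝ (Fin d)) (min δ (1 / (2 * κ)))) :
    ∀ q ∈ closedBall (0 : EuclideanSpace ℝ (Fin d)) (min δ (1 / (2 * κ))),
      ‖(J q).comp (Umap u qs q) - (J 0).comp (Umap u qs 0)‖ ≤ 4 * Real.sqrt d * ‖q‖ := by
  set η := min δ (1 / (2 * κ)) with hη
  have hη0 : 0 ≤ η := le_min hδ.le (by positivity)
  have hηδ : η ≤ δ := min_le_left _ _
  have hηκ : κ * η ≤ 1 / 2 := by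
    have : η ≤ 1 / (2 * κ) := min_le_right _ _
    calc κ * η ≤ κ * (1 / (2 * κ)) := mul_le_mul_of_nonneg_left this hκ.le
      _ = 1 / 2 := by field_simp
  have hsub : closedBall (0 : EuclideanSpace ℝ (Fin d)) η ⊆ closedBall 0 δ :=
    closedBall_subset_closedBall hηδ
  -- norm of J 0
  have hJ0norm : ‖J 0‖ ≤ 1 := by
    rw [hJ0]
    exact ContinuousLinearMap.opNorm_le_bound _ zero_le_one
      (fun x => by rw [one_mul]; exact projCLM_apply_norm_le d D hdD x)
  -- norm of J p for p in the small ball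
  have hJnorm : ∀ p ∈ closedBall (0 : EuclideanSpace ℝ (Fin d)) η, ‖J p‖ ≤ 3 / 2 := by
    intro p hp
    have hpη : ‖p‖ ≤ η := by simpa [mem_closedBall, dist_zero_right] using hp
    have h1 : ‖J p - J 0‖ ≤ κ * ‖p‖ := hJlip p (hsub hp)
    have h2 : κ * ‖p‖ ≤ 1 / 2 :=
      le_trans (mul_le_mul_of_nonneg_left hpη hκ.le) hηκ
    calc ‖J p‖ ≤ ‖J p - J 0‖ + ‖J 0‖ := by
          simpa using norm_add_le (J p - J 0) (J 0)
      _ ≤ 1 / 2 + 1 := add_le_add (le_trans h1 h2) hJ0norm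
      _ = 3 / 2 := by norm_num
  -- u is 3/2-Lipschitz on the small ball
  have hLip : ∀ p ∈ closedBall (0 : EuclideanSpace ℝ (Fin d)) η,
      ∀ p' ∈ closedBall (0 : EuclideanSpace ℝ (Fin d)) η,
      ‖u p - u p'‖ ≤ 3 / 2 * ‖p - p'‖ := by
    intro p hp p' hp'
    apply Convex.norm_image_sub_le_of_norm_hasFDerivWithin_le
      (f' := fun x => ContinuousLinearMap.adjoint (J x)) (C := 3 / 2)
      (fun x hx => (hu x (hsub hx)).mono hsub)
      (fun x hx => by
        rw [LinearIsometryEquiv.norm_map]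
        exact hJnorm x hx)
      (convex_closedBall _ _) hp' hp
  intro q hq
  have hqη : ‖q‖ ≤ η := by simpa [mem_closedBall, dist_zero_right] using hq
  have hqsη : ∀ ℓ, ‖qs ℓ‖ ≤ η := fun ℓ => by
    simpa [mem_closedBall, dist_zero_right] using hqs ℓ
  -- column bounds
  have hcolq : ∀ ℓ, ‖u q - u (qs ℓ)‖ ≤ 3 * η := by
    intro ℓ
    calc ‖u q - u (qs ℓ)‖ ≤ 3 / 2 * ‖q - qs ℓ‖ := hLip q hq (qs ℓ) (hqs ℓ)
      _ ≤ 3 / 2 * (2 * η) := by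
          apply mul_le_mul_of_nonneg_left _ (by norm_num)
          calc ‖q - qs ℓ‖ ≤ ‖q‖ + ‖qs ℓ‖ := norm_sub_le _ _
            _ ≤ η + η := add_le_add hqη (hqsη ℓ)
            _ = 2 * η := by ring
      _ = 3 * η := by ring
  have h0ball : (0 : EuclideanSpace ℝ (Fin d)) ∈ closedBall (0 : EuclideanSpace ℝ (Fin d)) η :=
    mem_closedBall_self hη0
  have hdiffcol : ‖u q - u 0‖ ≤ 3 / 2 * ‖q‖ := by
    have := hLip q hq 0 h0ball
    simpa using this
  -- norm of Umap at q
  have hUq : ‖Umap u qs q‖ ≤ Real.sqrt d * (3 * η) := by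
    apply ContinuousLinearMap.opNorm_le_bound _ (by positivity)
    intro y
    exact comb_norm_le _ (3 * η) (by positivity) hcolq y
  -- norm of Umap difference
  have hUdiff : ‖Umap u qs q - Umap u qs 0‖ ≤ Real.sqrt d * (3 / 2 * ‖q‖) := by
    apply ContinuousLinearMap.opNorm_le_bound _ (by positivity)
    intro y
    have happ : (Umap u qs q - Umap u qs 0) y = ∑ ℓ : Fin d, y ℓ • (u q - u 0) := by
      simp only [ContinuousLinearMap.sub_apply]
      show (∑ ℓ : Fin d, y ℓ • (u q - u (qs ℓ))) - (∑ ℓ : Fin d, y ℓ • (u 0 - u (qs ℓ)))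
        = ∑ ℓ : Fin d, y ℓ • (u q - u 0)
      rw [← Finset.sum_sub_distrib]
      apply Finset.sum_congr rfl
      intro ℓ _
      rw [← smul_sub]
      congr 1
      abel
    rw [happ]
    exact comb_norm_le (fun _ => u q - u 0) (3 / 2 * ‖q‖)
      (by positivity) (fun _ => hdiffcol) y
  -- combine
  have hsplit : (J q).comp (Umap u qs q) - (J 0).comp (Umap u qs 0)
      = (J q - J 0).comp (Umap u qs q) + (J 0).comp (Umap u qs q - Umap u qs 0) := by
    ext y
    simp [ContinuousLinearMap.comp_apply, ContinuousLinearMap.sub_apply,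
      ContinuousLinearMap.add_apply, map_sub]
  have hsd : (0:ℝ) ≤ Real.sqrt d := Real.sqrt_nonneg _
  have hterm1 : ‖(J q - J 0).comp (Umap u qs q)‖ ≤ 3 / 2 * Real.sqrt d * ‖q‖ := by
    calc ‖(J q - J 0).comp (Umap u qs q)‖ ≤ ‖J q - J 0‖ * ‖Umap u qs q‖ :=
          ContinuousLinearMap.opNorm_comp_le _ _
      _ ≤ (κ * ‖q‖) * (Real.sqrt d * (3 * η)) := by
          apply mul_le_mul (hJlip q (hsub hq)) hUq (norm_nonneg _) (by positivity)
      _ = (κ * η) * (3 * Real.sqrt d * ‖q‖) := by ring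
      _ ≤ (1 / 2) * (3 * Real.sqrt d * ‖q‖) := by
          apply mul_le_mul_of_nonneg_right hηκ (by positivity)
      _ = 3 / 2 * Real.sqrt d * ‖q‖ := by ring
  have hterm2 : ‖(J 0).comp (Umap u qs q - Umap u qs 0)‖ ≤ 3 / 2 * Real.sqrt d * ‖q‖ := by
    calc ‖(J 0).comp (Umap u qs q - Umap u qs 0)‖
        ≤ ‖J 0‖ * ‖Umap u qs q - Umap u qs 0‖ := ContinuousLinearMap.opNorm_comp_le _ _
      _ ≤ 1 * (Real.sqrt d * (3 / 2 * ‖q‖)) :=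
          mul_le_mul hJ0norm hUdiff (norm_nonneg _) zero_le_one
      _ = 3 / 2 * Real.sqrt d * ‖q‖ := by ring
  calc ‖(J q).comp (Umap u qs q) - (J 0).comp (Umap u qs 0)‖
      = ‖(J q - J 0).comp (Umap u qs q) + (J 0).comp (Umap u qs q - Umap u qs 0)‖ := by
        rw [hsplit]
    _ ≤ ‖(J q - J 0).comp (Umap u qs q)‖ + ‖(J 0).comp (Umap u qs q - Umap u qs 0)‖ :=
        norm_add_le _ _
    _ ≤ 3 / 2 * Real.sqrt d * ‖q‖ + 3 / 2 * Real.sqrt d * ‖q‖ := add_le_add hterm1 hterm2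
    _ = 3 * Real.sqrt d * ‖q‖ := by ring
    _ ≤ 4 * Real.sqrt d * ‖q‖ := by
        apply mul_le_mul_of_nonneg_right _ (norm_nonneg _)
        apply mul_le_mul_of_nonneg_right _ hsd
        norm_num
end

section
/- For every q with ‖q‖_d ≤ 2β* and every y ∈ ℝ^d with ‖y‖_d = 1, one has ‖J(q)U(q)y‖_d ≥ γ/2. -/
open Metric

lemma aux_sum_abs {d : ℕ} (y : EuclideanSpace ℝ (Fin d)) :
    ∑ ℓ : Fin d, |y ℓ| ≤ Real.sqrt d * ‖y‖ := by
  have h1 : (∑ ℓ : Fin d, |y ℓ|) ^ 2 ≤ (d : ℝ) * ‖y‖ ^ 2 := by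
    have := Finset.sum_mul_sq_le_sq_mul_sq Finset.univ (fun _ : Fin d => (1 : ℝ))
      (fun ℓ => |y ℓ|)
    simpa [EuclideanSpace.norm_eq, Real.sq_sqrt, Finset.sum_nonneg, sq_abs,
      Real.sq_sqrt (Finset.sum_nonneg fun i _ => sq_nonneg (y i)),
      Finset.card_univ, mul_comm] using this
  have h2 : ∑ ℓ : Fin d, |y ℓ| ≤ Real.sqrt ((d : ℝ) * ‖y‖ ^ 2) := by
    have hnn : (0:ℝ) ≤ ∑ ℓ : Fin d, |y ℓ| := Finset.sum_nonneg fun _ _ => abs_nonneg _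
    nlinarith [Real.sq_sqrt (le_trans (sq_nonneg _) h1), Real.sqrt_nonneg ((d:ℝ) * ‖y‖^2)]
  calc ∑ ℓ : Fin d, |y ℓ| ≤ Real.sqrt ((d : ℝ) * ‖y‖ ^ 2) := h2
    _ = Real.sqrt d * ‖y‖ := by
        rw [Real.sqrt_mul (Nat.cast_nonneg d), Real.sqrt_sq (norm_nonneg y)]

lemma aux_proj_le {d D : ℕ} (h : d ≤ D) (x : EuclideanSpace ℝ (Fin D)) :
    ∑ i : Fin d, ‖x (Fin.castLE h i)‖ ^ 2 ≤ ∑ j : Fin D, ‖x j‖ ^ 2 := by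
  have heq : ∑ i : Fin d, ‖x (Fin.castLE h i)‖ ^ 2
      = ∑ j ∈ Finset.univ.map (Fin.castLEEmb h), ‖x j‖ ^ 2 := by
    rw [Finset.sum_map]; rfl
  rw [heq]
  exact Finset.sum_le_sum_of_subset_of_nonneg (Finset.subset_univ _)
    (fun j _ _ => sq_nonneg _)

lemma aux_proj_norm (d D : ℕ) (h : d ≤ D) : ‖projCLM d D h‖ ≤ 1 := by
  refine ContinuousLinearMap.opNorm_le_bound _ zero_le_one (fun x => ?_)
  rw [one_mul]
  have h1 : ‖projCLM d D h x‖ = Real.sqrt (∑ i : Fin d, ‖x (Fin.castLE h i)‖ ^ 2) := by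
    rw [EuclideanSpace.norm_eq]; rfl
  rw [h1, EuclideanSpace.norm_eq]
  exact Real.sqrt_le_sqrt (aux_proj_le h x)

lemma Umap_apply {d D : ℕ}
    (u : EuclideanSpace ℝ (Fin d) → EuclideanSpace ℝ (Fin D))
    (qs : Fin d → EuclideanSpace ℝ (Fin d)) (q y : EuclideanSpace ℝ (Fin d)) :
    Umap u qs q y = ∑ ℓ : Fin d, y ℓ • (u q - u (qs ℓ)) := rfl

lemma aux_Umap_norm {d D : ℕ}
    (u : EuclideanSpace ℝ (Fin d) → EuclideanSpace ℝ (Fin D))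
    (qs : Fin d → EuclideanSpace ℝ (Fin d)) (q y : EuclideanSpace ℝ (Fin d))
    {C : ℝ} (hC : ∀ ℓ, ‖u q - u (qs ℓ)‖ ≤ C) (hC0 : 0 ≤ C) :
    ‖Umap u qs q y‖ ≤ Real.sqrt d * ‖y‖ * C := by
  rw [Umap_apply]
  calc ‖∑ ℓ : Fin d, y ℓ • (u q - u (qs ℓ))‖
      ≤ ∑ ℓ : Fin d, ‖y ℓ • (u q - u (qs ℓ))‖ := norm_sum_le _ _
    _ ≤ ∑ ℓ : Fin d, |y ℓ| * C := by
        refine Finset.sum_le_sum fun ℓ _ => ?_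
        rw [norm_smul, Real.norm_eq_abs]
        exact mul_le_mul_of_nonneg_left (hC ℓ) (abs_nonneg _)
    _ = (∑ ℓ : Fin d, |y ℓ|) * C := by rw [Finset.sum_mul]
    _ ≤ Real.sqrt d * ‖y‖ * C :=
        mul_le_mul_of_nonneg_right (aux_sum_abs y) hC0

/-- with `β* = (1/2)·min(1/(2κ), δ*, γ/(8√d))`, for every `q` with
`‖q‖_d ≤ 2β*` and every unit vector `y ∈ ℝ^d`, `‖J(q)U(q)y‖_d ≥ γ/2`. -/
theorem statement4 (d D : ℕ) (hd : 1 ≤ d) (hdD : d ≤ D)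
    (u : EuclideanSpace ℝ (Fin d) → EuclideanSpace ℝ (Fin D))
    (δ κ : ℝ) (hδ : 0 < δ) (hκ : 0 < κ)
    (J : EuclideanSpace ℝ (Fin d) → (EuclideanSpace ℝ (Fin D) →L[ℝ] EuclideanSpace ℝ (Fin d)))
    (hu : ∀ q ∈ closedBall (0 : EuclideanSpace ℝ (Fin d)) δ,
      HasFDerivWithinAt u (ContinuousLinearMap.adjoint (J q)) (closedBall 0 δ) q)
    (hJcont : ContinuousOn J (closedBall 0 δ))
    (hJ0 : J 0 = projCLM d D hdD)
    (hJlip : ∀ q ∈ closedBall (0 : EuclideanSpace ℝ (Fin d)) δ, ‖J q - J 0‖ ≤ κ * ‖q‖)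
    (qs : Fin d → EuclideanSpace ℝ (Fin d))
    (hqs : ∀ ℓ, qs ℓ ∈ closedBall (0 : EuclideanSpace ℝ (Fin d)) (min δ (1 / (2 * κ))))
    (γ : ℝ) (hγpos : 0 < γ)
    (hγ : ∀ y : EuclideanSpace ℝ (Fin d), ‖y‖ = 1 → γ ≤ ‖(J 0) ((Umap u qs 0) y)‖) :
    ∀ q : EuclideanSpace ℝ (Fin d),
      ‖q‖ ≤ 2 * ((1 / 2) * min (1 / (2 * κ)) (min δ (γ / (8 * Real.sqrt d)))) →
      ∀ y : EuclideanSpace ℝ (Fin d), ‖y‖ = 1 →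
        γ / 2 ≤ ‖(J q) ((Umap u qs q) y)‖ := by
  intro q hq y hy
  have hsdpos : 0 < Real.sqrt d := Real.sqrt_pos.mpr (Nat.cast_pos.mpr hd)
  set sd := Real.sqrt d with hsd
  have hqbound : ‖q‖ ≤ min (1 / (2 * κ)) (min δ (γ / (8 * sd))) := by linarith [hq]
  have hq1 : ‖q‖ ≤ 1 / (2 * κ) := hqbound.trans (min_le_left _ _)
  have hq2 : ‖q‖ ≤ δ := hqbound.trans ((min_le_right _ _).trans (min_le_left _ _))
  have hq3 : ‖q‖ ≤ γ / (8 * sd) := hqbound.trans ((min_le_right _ _).trans (min_le_right _ _))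
  set η := min δ (1 / (2 * κ)) with hη
  have hsub : closedBall (0 : EuclideanSpace ℝ (Fin d)) η ⊆ closedBall 0 δ :=
    closedBall_subset_closedBall (min_le_left _ _)
  have hJ0n : ‖J 0‖ ≤ 1 := by rw [hJ0]; exact aux_proj_norm d D hdD
  have hJn : ∀ x ∈ closedBall (0 : EuclideanSpace ℝ (Fin d)) η, ‖J x‖ ≤ 3 / 2 := by
    intro x hx
    have hxη : ‖x‖ ≤ 1 / (2 * κ) :=
      (mem_closedBall_zero_iff.mp hx).trans (min_le_right _ _)
    have h1 : ‖J x - J 0‖ ≤ κ * ‖x‖ := hJlip x (hsub hx)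
    have h2 : κ * ‖x‖ ≤ 1 / 2 := by
      have := mul_le_mul_of_nonneg_left hxη hκ.le
      rw [mul_one_div] at this
      calc κ * ‖x‖ ≤ κ / (2 * κ) := this
        _ = 1 / 2 := by field_simp
    calc ‖J x‖ = ‖J 0 + (J x - J 0)‖ := by rw [add_sub_cancel]
      _ ≤ ‖J 0‖ + ‖J x - J 0‖ := norm_add_le _ _
      _ ≤ 3 / 2 := by linarith
  have hlip : ∀ p ∈ closedBall (0 : EuclideanSpace ℝ (Fin d)) η,
      ∀ p' ∈ closedBall (0 : EuclideanSpace ℝ (Fin d)) η, ‖u p' - u p‖ ≤ 3 / 2 * ‖p' - p‖ := by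
    intro p hp p' hp'
    exact Convex.norm_image_sub_le_of_norm_hasFDerivWithin_le
      (fun x hx => (hu x (hsub hx)).mono hsub)
      (fun x hx => by
        rw [ContinuousLinearMap.adjoint.norm_map]; exact hJn x hx)
      (convex_closedBall _ _) hp hp'
  have h0η : (0 : EuclideanSpace ℝ (Fin d)) ∈ closedBall (0 : EuclideanSpace ℝ (Fin d)) η :=
    mem_closedBall_self (le_min hδ.le (by positivity))
  have hqη : q ∈ closedBall (0 : EuclideanSpace ℝ (Fin d)) η :=
    mem_closedBall_zero_iff.mpr (le_min hq2 hq1)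
  -- bound on ‖Umap q y‖
  have hUq : ‖Umap u qs q y‖ ≤ sd * (3 / (2 * κ)) := by
    have hC : ∀ ℓ, ‖u q - u (qs ℓ)‖ ≤ 3 / (2 * κ) := by
      intro ℓ
      have hℓ := hqs ℓ
      have := hlip (qs ℓ) hℓ q hqη
      have hqsn : ‖qs ℓ‖ ≤ 1 / (2 * κ) :=
        (mem_closedBall_zero_iff.mp hℓ).trans (min_le_right _ _)
      have hdist : ‖q - qs ℓ‖ ≤ ‖q‖ + ‖qs ℓ‖ := norm_sub_le _ _
      calc ‖u q - u (qs ℓ)‖ ≤ 3 / 2 * ‖q - qs ℓ‖ := this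
        _ ≤ 3 / 2 * (1 / (2 * κ) + 1 / (2 * κ)) := by
            have : ‖q - qs ℓ‖ ≤ 1 / (2 * κ) + 1 / (2 * κ) := hdist.trans (by linarith)
            linarith
        _ = 3 / (2 * κ) := by field_simp; ring
    have := aux_Umap_norm u qs q y hC (by positivity)
    rwa [hy, mul_one] at this
  -- bound on ‖Umap q y - Umap 0 y‖
  have hUdiff : ‖Umap u qs q y - Umap u qs 0 y‖ ≤ sd * (3 / 2 * ‖q‖) := by
    have heq : Umap u qs q y - Umap u qs 0 y = ∑ ℓ : Fin d, y ℓ • (u q - u 0) := by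
      rw [Umap_apply, Umap_apply, ← Finset.sum_sub_distrib]
      congr 1; ext ℓ; rw [← smul_sub]; rw [sub_sub_sub_cancel_right]
    rw [heq]
    have h1 : ‖u q - u 0‖ ≤ 3 / 2 * ‖q‖ := by
      have := hlip 0 h0η q hqη
      simpa using this
    calc ‖∑ ℓ : Fin d, y ℓ • (u q - u 0)‖ ≤ ∑ ℓ : Fin d, ‖y ℓ • (u q - u 0)‖ :=
          norm_sum_le _ _
      _ ≤ ∑ ℓ : Fin d, |y ℓ| * (3 / 2 * ‖q‖) := by
          refine Finset.sum_le_sum fun ℓ _ => ?_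
          rw [norm_smul, Real.norm_eq_abs]
          exact mul_le_mul_of_nonneg_left h1 (abs_nonneg _)
      _ = (∑ ℓ : Fin d, |y ℓ|) * (3 / 2 * ‖q‖) := by rw [Finset.sum_mul]
      _ ≤ sd * ‖y‖ * (3 / 2 * ‖q‖) :=
          mul_le_mul_of_nonneg_right (aux_sum_abs y) (by positivity)
      _ = sd * (3 / 2 * ‖q‖) := by rw [hy, mul_one]
  -- perturbation bound
  have hpert : ‖J q (Umap u qs q y) - J 0 (Umap u qs 0 y)‖ ≤ 3 * γ / 8 := by
    have hdec : J q (Umap u qs q y) - J 0 (Umap u qs 0 y)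
        = (J q - J 0) (Umap u qs q y) + J 0 (Umap u qs q y - Umap u qs 0 y) := by
      simp only [ContinuousLinearMap.sub_apply, map_sub]; abel
    rw [hdec]
    have t1 : ‖(J q - J 0) (Umap u qs q y)‖ ≤ κ * ‖q‖ * (sd * (3 / (2 * κ))) := by
      calc ‖(J q - J 0) (Umap u qs q y)‖ ≤ ‖J q - J 0‖ * ‖Umap u qs q y‖ :=
            ContinuousLinearMap.le_opNorm _ _
        _ ≤ κ * ‖q‖ * (sd * (3 / (2 * κ))) := by
            apply mul_le_mul (hJlip q (hsub hqη)) hUq (norm_nonneg _) (by positivity)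
    have t1' : κ * ‖q‖ * (sd * (3 / (2 * κ))) = 3 / 2 * sd * ‖q‖ := by
      field_simp
    have t2 : ‖J 0 (Umap u qs q y - Umap u qs 0 y)‖ ≤ sd * (3 / 2 * ‖q‖) := by
      calc ‖J 0 (Umap u qs q y - Umap u qs 0 y)‖
          ≤ ‖J 0‖ * ‖Umap u qs q y - Umap u qs 0 y‖ := ContinuousLinearMap.le_opNorm _ _
        _ ≤ 1 * (sd * (3 / 2 * ‖q‖)) := by
            apply mul_le_mul hJ0n hUdiff (norm_nonneg _) zero_le_one
        _ = sd * (3 / 2 * ‖q‖) := one_mul _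
    have hq3' : sd * ‖q‖ ≤ γ / 8 := by
      have := mul_le_mul_of_nonneg_left hq3 hsdpos.le
      calc sd * ‖q‖ ≤ sd * (γ / (8 * sd)) := this
        _ = γ / 8 := by field_simp
    calc ‖(J q - J 0) (Umap u qs q y) + J 0 (Umap u qs q y - Umap u qs 0 y)‖
        ≤ ‖(J q - J 0) (Umap u qs q y)‖ + ‖J 0 (Umap u qs q y - Umap u qs 0 y)‖ :=
          norm_add_le _ _
      _ ≤ 3 / 2 * sd * ‖q‖ + sd * (3 / 2 * ‖q‖) := by rw [← t1']; linarith
      _ = 3 * (sd * ‖q‖) := by ring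
      _ ≤ 3 * γ / 8 := by linarith
  have hB := hγ y hy
  have htri : ‖J 0 (Umap u qs 0 y)‖ ≤ ‖J q (Umap u qs q y)‖
      + ‖J q (Umap u qs q y) - J 0 (Umap u qs 0 y)‖ := by
    have := norm_sub_norm_le (J q (Umap u qs q y)) (J 0 (Umap u qs 0 y))
    linarith [abs_le.mp (abs_norm_sub_norm_le (J q (Umap u qs q y)) (J 0 (Umap u qs 0 y)))]
  linarith
end
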